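/- For m variables x_1, ..., x_m, an integer a ≥ 0, and the complete homogeneous symmetric polynomial h_a, the alternation identity Σ_{w ∈ S_m} ε(w) w(h_a(x) x_1^{m-1} x_2^{m-2} ⋯ x_m^0) = Σ_{w ∈ S_m} ε(w) w(x_1^{a+m-1} x_2^{m-2} ⋯ x_m^0) holds, where S_m permutes the variables and ε is the sign character. Moreover, for 1-m ≤ a < 0 the left-hand side (with h_a := 0) and the right-hand side both vanish. -/

import Mathlib

/-- Complete homogeneous symmetric polynomial, `0` for negative degree. -/
noncomputable def completeHom {R : Type*} [CommRing R] {m : ℕ} (x : Fin m → R) (k : ℤ) : R :=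
  if 0 ≤ k then ∑ c ∈ Finset.Nat.antidiagonalTuple m k.toNat, ∏ i, x i ^ c i else 0

open Finset

namespace S9

variable {R : Type*} [CommRing R] {m : ℕ}

noncomputable def altSum (x : Fin m → R) (g : Fin m → ℕ) : R :=
  ∑ σ : Equiv.Perm (Fin m), ((Equiv.Perm.sign σ : ℤ) : R) * ∏ i, x (σ i) ^ g i

lemma prod_comp_swap (x : Fin m → R) (g : Fin m → ℕ) (σ : Equiv.Perm (Fin m)) (i j : Fin m) :
    ∏ k, x ((σ * Equiv.swap i j) k) ^ g k = ∏ k, x (σ k) ^ g (Equiv.swap i j k) := by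
  have h := Equiv.prod_comp (Equiv.swap i j) (fun k => x (σ k) ^ g (Equiv.swap i j k))
  simpa [Equiv.Perm.mul_apply, Equiv.swap_apply_self] using h

lemma altSum_eq_zero (x : Fin m → R) {g : Fin m → ℕ} {i j : Fin m} (hij : i ≠ j)
    (hg : g i = g j) : altSum x g = 0 := by
  have hswap : ∀ k, g (Equiv.swap i j k) = g k := by
    intro k
    rcases eq_or_ne k i with rfl | hki
    · simp [Equiv.swap_apply_left, hg]
    rcases eq_or_ne k j with rfl | hkj
    · simp [Equiv.swap_apply_right, hg]
    · rw [Equiv.swap_apply_of_ne_of_ne hki hkj]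
  refine Finset.sum_involution (fun σ _ => σ * Equiv.swap i j) ?_ ?_ (fun σ _ => mem_univ _) ?_
  · intro σ _
    have hs : ((Equiv.Perm.sign (σ * Equiv.swap i j) : ℤ) : R) = -((Equiv.Perm.sign σ : ℤ) : R) := by
      rw [Equiv.Perm.sign_mul, Equiv.Perm.sign_swap hij]
      push_cast
      ring
    rw [hs, prod_comp_swap]
    have : ∏ k, x (σ k) ^ g (Equiv.swap i j k) = ∏ k, x (σ k) ^ g k :=
      Finset.prod_congr rfl fun k _ => by rw [hswap]
    rw [this]; ring
  · intro σ _ _ h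
    apply hij
    have h1 : Equiv.swap i j = 1 := by
      have h2 : σ * Equiv.swap i j = σ * 1 := by rw [mul_one]; exact h
      exact mul_left_cancel h2
    have h3 := congrArg (fun e => e i) h1
    simp only [Equiv.swap_apply_left, Equiv.Perm.one_apply] at h3
    exact h3.symm
  · intro σ _
    show σ * Equiv.swap i j * Equiv.swap i j = σ
    rw [mul_assoc, Equiv.swap_mul_self, mul_one]

lemma altSum_comp_swap (x : Fin m → R) (g : Fin m → ℕ) {i j : Fin m} (hij : i ≠ j) :
    altSum x (g ∘ Equiv.swap i j) = - altSum x g := by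
  unfold altSum
  rw [← Equiv.sum_comp (Equiv.mulRight (Equiv.swap i j))
    (fun σ : Equiv.Perm (Fin m) => ((Equiv.Perm.sign σ : ℤ) : R) * ∏ k, x (σ k) ^ (g ∘ Equiv.swap i j) k)]
  rw [← Finset.sum_neg_distrib]
  refine Finset.sum_congr rfl fun σ _ => ?_
  have hs : ((Equiv.Perm.sign (σ * Equiv.swap i j) : ℤ) : R) = -((Equiv.Perm.sign σ : ℤ) : R) := by
    rw [Equiv.Perm.sign_mul, Equiv.Perm.sign_swap hij]; push_cast; ring
  have hmul : Equiv.mulRight (Equiv.swap i j) σ = σ * Equiv.swap i j := rfl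
  rw [hmul, hs, prod_comp_swap]
  have : ∏ k, x (σ k) ^ (g ∘ Equiv.swap i j) (Equiv.swap i j k) = ∏ k, x (σ k) ^ g k :=
    Finset.prod_congr rfl fun k _ => by simp [Function.comp, Equiv.swap_apply_self]
  rw [this]; ring

def Jset (c : Fin m → ℕ) : Finset (Fin m) :=
  Finset.univ.filter (fun i => (i : ℕ) ≠ 0 ∧ c i ≠ 0)

def czero (m a : ℕ) : Fin m → ℕ := fun i => if (i : ℕ) = 0 then a else 0

lemma jset_nonempty (hm : 0 < m) {a : ℕ} {c : Fin m → ℕ}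
    (hc : c ∈ (Finset.Nat.antidiagonalTuple m a).erase (czero m a)) : (Jset c).Nonempty := by
  classical
  obtain ⟨hne, hmem⟩ := Finset.mem_erase.1 hc
  rw [Finset.Nat.mem_antidiagonalTuple] at hmem
  by_contra h
  rw [Finset.not_nonempty_iff_eq_empty] at h
  have hz : ∀ i : Fin m, (i : ℕ) ≠ 0 → c i = 0 := by
    intro i hi
    by_contra hci
    have : i ∈ Jset c := by simp [Jset, hi, hci]
    simp [h] at this
  apply hne
  funext i
  by_cases hi : (i : ℕ) = 0
  · have hiz : i = ⟨0, hm⟩ := Fin.ext hi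
    simp only [czero, hi, if_pos]
    rw [← hmem]
    symm
    refine Finset.sum_eq_single_of_mem i (mem_univ i) fun j _ hj => ?_
    refine hz j fun hj0 => hj ?_
    rw [hiz]; exact Fin.ext (by simp [hj0])
  · simp only [czero, hi, if_neg, ite_false]
    exact hz i hi

variable {c : Fin m → ℕ} (hc : (Jset c).Nonempty)

def jmax (c : Fin m → ℕ) (hc : (Jset c).Nonempty) : Fin m := (Jset c).max' hc

def jpred (c : Fin m → ℕ) (hc : (Jset c).Nonempty) : Fin m :=
  ⟨(jmax c hc : ℕ) - 1, lt_of_le_of_lt (Nat.sub_le _ _) (jmax c hc).isLt⟩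

lemma jmax_mem : jmax c hc ∈ Jset c := (Jset c).max'_mem hc
lemma jmax_val_ne : (jmax c hc : ℕ) ≠ 0 := by
  have := jmax_mem (c := c) (hc := hc); simp [Jset] at this; exact this.1
lemma c_jmax_ne : c (jmax c hc) ≠ 0 := by
  have := jmax_mem (c := c) (hc := hc); simp [Jset] at this; exact this.2
lemma jpred_ne_jmax : jpred c hc ≠ jmax c hc := by
  have h1 := jmax_val_ne (c := c) (hc := hc)
  intro h; have := congrArg Fin.val h; simp only [jpred] at this; omega
lemma le_jmax {i : Fin m} (hi : (i : ℕ) ≠ 0) (hci : c i ≠ 0) : i ≤ jmax c hc :=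
  (Jset c).le_max' i (by simp [Jset, hi, hci])

def flip (c : Fin m → ℕ) (hc : (Jset c).Nonempty) : Fin m → ℕ :=
  Function.update (Function.update c (jpred c hc) (c (jmax c hc) - 1)) (jmax c hc)
    (c (jpred c hc) + 1)

lemma flip_jmax : flip c hc (jmax c hc) = c (jpred c hc) + 1 := by simp [flip]
lemma flip_jpred : flip c hc (jpred c hc) = c (jmax c hc) - 1 := by
  simp [flip, Function.update_of_ne (jpred_ne_jmax (c := c) (hc := hc))]
lemma flip_other {k : Fin m} (h1 : k ≠ jmax c hc) (h2 : k ≠ jpred c hc) :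
    flip c hc k = c k := by
  simp [flip, Function.update_of_ne h1, Function.update_of_ne h2]

lemma flip_sum : ∑ i, flip c hc i = ∑ i, c i := by
  classical
  set j := jmax c hc
  set j' := jpred c hc
  have hne : j' ≠ j := jpred_ne_jmax (c := c) (hc := hc)
  have hcj : c j ≠ 0 := c_jmax_ne (c := c) (hc := hc)
  have h1 : ∑ i, flip c hc i
      = (c j' + 1) + ∑ i ∈ univ \ {j}, Function.update c j' (c j - 1) i := by
    rw [flip]
    exact Finset.sum_update_of_mem (mem_univ j) _ _
  have h2 : ∑ i ∈ univ \ {j}, Function.update c j' (c j - 1) i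
      = (c j - 1) + ∑ i ∈ (univ \ {j}) \ {j'}, c i :=
    Finset.sum_update_of_mem (by simp [hne]) _ _
  have h3 : ∑ i, c i = c j + ∑ i ∈ univ \ {j}, c i := by
    rw [Finset.sdiff_singleton_eq_erase]
    exact (Finset.add_sum_erase _ _ (mem_univ j)).symm
  have h4 : ∑ i ∈ univ \ {j}, c i = c j' + ∑ i ∈ (univ \ {j}) \ {j'}, c i := by
    rw [Finset.sdiff_singleton_eq_erase, Finset.sdiff_singleton_eq_erase]
    exact (Finset.add_sum_erase _ _ (Finset.mem_erase.2 ⟨hne, mem_univ _⟩)).symm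
  rw [h1, h2, h3, h4]
  omega

lemma jset_flip_nonempty : (Jset (flip c hc)).Nonempty := by
  refine ⟨jmax c hc, ?_⟩
  simp only [Jset, mem_filter, mem_univ, true_and]
  exact ⟨jmax_val_ne (c := c) (hc := hc), by rw [flip_jmax]; omega⟩

lemma jmax_flip : jmax (flip c hc) (jset_flip_nonempty (c := c) (hc := hc)) = jmax c hc := by
  classical
  set j := jmax c hc with hj
  apply le_antisymm
  · apply Finset.max'_le
    intro i hi
    simp only [Jset, mem_filter, mem_univ, true_and] at hi
    obtain ⟨hi0, hfi⟩ := hi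
    rcases eq_or_ne i j with rfl | hij
    · exact le_refl _
    rcases eq_or_ne i (jpred c hc) with rfl | hij'
    · have h1 := jmax_val_ne (c := c) (hc := hc)
      show (jpred c hc : ℕ) ≤ (j : ℕ)
      simp only [jpred]; omega
    · rw [flip_other hc hij hij'] at hfi
      exact le_jmax hc hi0 hfi
  · apply Finset.le_max'
    simp only [Jset, mem_filter, mem_univ, true_and]
    exact ⟨jmax_val_ne (c := c) (hc := hc), by rw [flip_jmax]; omega⟩

lemma jpred_flip : jpred (flip c hc) (jset_flip_nonempty (c := c) (hc := hc)) = jpred c hc := by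
  simp only [jpred, jmax_flip]

lemma flip_flip : flip (flip c hc) (jset_flip_nonempty (c := c) (hc := hc)) = c := by
  classical
  set hcf := jset_flip_nonempty (c := c) (hc := hc)
  have hne : jpred c hc ≠ jmax c hc := jpred_ne_jmax (c := c) (hc := hc)
  have hcj : c (jmax c hc) ≠ 0 := c_jmax_ne (c := c) (hc := hc)
  have hjf : jmax (flip c hc) hcf = jmax c hc := jmax_flip (c := c) (hc := hc)
  have hjf' : jpred (flip c hc) hcf = jpred c hc := jpred_flip (c := c) (hc := hc)
  have key : flip (flip c hc) hcf
      = Function.update (Function.update (flip c hc) (jpred c hc) ((flip c hc) (jmax c hc) - 1))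
          (jmax c hc) ((flip c hc) (jpred c hc) + 1) := by
    rw [flip, hjf, hjf']
  rw [key]
  funext k
  rcases eq_or_ne k (jmax c hc) with rfl | hkj
  · rw [Function.update_self, flip_jpred]
    omega
  rcases eq_or_ne k (jpred c hc) with rfl | hkj'
  · rw [Function.update_of_ne hne, Function.update_self, flip_jmax]
    omega
  · rw [Function.update_of_ne hkj, Function.update_of_ne hkj', flip_other hc hkj hkj']

lemma g_flip :
    (fun i : Fin m => flip c hc i + (m - 1 - (i : ℕ)))
      = (fun i : Fin m => c i + (m - 1 - (i : ℕ))) ∘ Equiv.swap (jpred c hc) (jmax c hc) := by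
  funext k
  have hv : (jmax c hc : ℕ) < m := (jmax c hc).isLt
  have hv0 : (jmax c hc : ℕ) ≠ 0 := jmax_val_ne (c := c) (hc := hc)
  have hcj : c (jmax c hc) ≠ 0 := c_jmax_ne (c := c) (hc := hc)
  have hjp : (jpred c hc : ℕ) = (jmax c hc : ℕ) - 1 := rfl
  rcases eq_or_ne k (jpred c hc) with rfl | hk1
  · simp only [Function.comp_apply, Equiv.swap_apply_left]
    rw [flip_jpred, hjp]
    omega
  rcases eq_or_ne k (jmax c hc) with rfl | hk2
  · simp only [Function.comp_apply, Equiv.swap_apply_right]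
    rw [flip_jmax, hjp]
    omega
  · simp only [Function.comp_apply, Equiv.swap_apply_of_ne_of_ne hk1 hk2]
    rw [flip_other hc hk2 hk1]

lemma cancel (hm : 0 < m) (x : Fin m → R) (a : ℕ) :
    ∑ c ∈ (Finset.Nat.antidiagonalTuple m a).erase (czero m a),
      altSum x (fun i => c i + (m - 1 - (i : ℕ))) = 0 := by
  classical
  refine Finset.sum_involution (fun c hcm => flip c (jset_nonempty hm hcm)) ?_ ?_ ?_ ?_
  · intro c hcm
    have hrel := g_flip (c := c) (hc := jset_nonempty hm hcm)
    rw [hrel, altSum_comp_swap x _ (jpred_ne_jmax (c := c) (hc := jset_nonempty hm hcm))]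
    ring
  · intro c hcm hne0 heq
    apply hne0
    have heq' : flip c (jset_nonempty hm hcm) = c := heq
    have hrel := g_flip (c := c) (hc := jset_nonempty hm hcm)
    rw [heq'] at hrel
    have hg : (fun i : Fin m => c i + (m - 1 - (i : ℕ))) (jpred c (jset_nonempty hm hcm))
        = (fun i : Fin m => c i + (m - 1 - (i : ℕ))) (jmax c (jset_nonempty hm hcm)) := by
      conv_lhs => rw [hrel]
      simp [Equiv.swap_apply_left]
    exact altSum_eq_zero x (jpred_ne_jmax (c := c) (hc := jset_nonempty hm hcm)) hg
  · intro c hcm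
    obtain ⟨hne, hmem⟩ := Finset.mem_erase.1 hcm
    rw [Finset.Nat.mem_antidiagonalTuple] at hmem
    refine Finset.mem_erase.2 ⟨?_, ?_⟩
    · intro h
      have h2 : flip c (jset_nonempty hm hcm) (jmax c (jset_nonempty hm hcm))
          = czero m a (jmax c (jset_nonempty hm hcm)) := congrFun h _
      rw [flip_jmax] at h2
      simp only [czero, if_neg (jmax_val_ne (c := c) (hc := jset_nonempty hm hcm))] at h2
      omega
    · rw [Finset.Nat.mem_antidiagonalTuple]
      rw [flip_sum (c := c) (hc := jset_nonempty hm hcm)]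
      exact hmem
  · intro c hcm
    exact flip_flip (c := c) (hc := jset_nonempty hm hcm)

end S9

/-- the alternation identity
`Σ_{w∈S_m} ε(w) w(h_a(x) x₁^{m-1}⋯x_m^0) = Σ_{w∈S_m} ε(w) w(x₁^{a+m-1} x₂^{m-2}⋯x_m^0)`
for `a ≥ 0`; moreover for `1-m ≤ a < 0` both sides (with `h_a := 0`) vanish. -/
theorem statement9 {R : Type*} [CommRing R] (m : ℕ) (hm : 0 < m) (x : Fin m → R) :
    (∀ a : ℕ,
      ∑ σ : Equiv.Perm (Fin m), ((Equiv.Perm.sign σ : ℤ) : R) *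
          (completeHom (x ∘ σ) (a : ℤ) * ∏ i, x (σ i) ^ (m - 1 - (i : ℕ))) =
      ∑ σ : Equiv.Perm (Fin m), ((Equiv.Perm.sign σ : ℤ) : R) *
          ∏ i, x (σ i) ^ (if (i : ℕ) = 0 then a + m - 1 else m - 1 - (i : ℕ))) ∧
    (∀ a : ℤ, 1 - (m : ℤ) ≤ a → a < 0 →
      (∑ σ : Equiv.Perm (Fin m), ((Equiv.Perm.sign σ : ℤ) : R) *
          (completeHom (x ∘ σ) a * ∏ i, x (σ i) ^ (m - 1 - (i : ℕ))) = 0) ∧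
      (∑ σ : Equiv.Perm (Fin m), ((Equiv.Perm.sign σ : ℤ) : R) *
          ∏ i, x (σ i) ^ (if (i : ℕ) = 0 then (a + m - 1).toNat else m - 1 - (i : ℕ)) = 0)) := by
  classical
  constructor
  · intro a
    have hch : ∀ σ : Equiv.Perm (Fin m), completeHom (x ∘ σ) (a : ℤ)
        = ∑ c ∈ Finset.Nat.antidiagonalTuple m a, ∏ i, x (σ i) ^ c i := by
      intro σ
      rw [completeHom, if_pos (Int.natCast_nonneg a)]
      simp [Int.toNat_natCast]
    have step1 : ∑ σ : Equiv.Perm (Fin m), ((Equiv.Perm.sign σ : ℤ) : R) *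
          (completeHom (x ∘ σ) (a : ℤ) * ∏ i, x (σ i) ^ (m - 1 - (i : ℕ)))
        = ∑ σ : Equiv.Perm (Fin m), ∑ c ∈ Finset.Nat.antidiagonalTuple m a,
            ((Equiv.Perm.sign σ : ℤ) : R) * ∏ i, x (σ i) ^ (c i + (m - 1 - (i : ℕ))) := by
      refine Finset.sum_congr rfl fun σ _ => ?_
      rw [hch σ, Finset.sum_mul, Finset.mul_sum]
      refine Finset.sum_congr rfl fun c _ => ?_
      congr 1
      rw [← Finset.prod_mul_distrib]
      exact Finset.prod_congr rfl fun i _ => (pow_add _ _ _).symm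
    rw [step1, Finset.sum_comm]
    have hc0 : S9.czero m a ∈ Finset.Nat.antidiagonalTuple m a := by
      rw [Finset.Nat.mem_antidiagonalTuple]
      rw [Finset.sum_eq_single_of_mem (⟨0, hm⟩ : Fin m) (Finset.mem_univ _)]
      · simp [S9.czero]
      · intro j _ hj
        simp only [S9.czero, ite_eq_right_iff]
        intro h0
        exact absurd (Fin.ext h0) hj
    show ∑ c ∈ Finset.Nat.antidiagonalTuple m a,
        S9.altSum x (fun i => c i + (m - 1 - (i : ℕ))) = _
    rw [← Finset.add_sum_erase _ _ hc0, S9.cancel hm x a, add_zero]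
    refine Finset.sum_congr rfl fun σ _ => ?_
    congr 1
    refine Finset.prod_congr rfl fun i _ => ?_
    congr 1
    by_cases hi : (i : ℕ) = 0 <;> simp only [S9.czero, hi, if_pos, if_neg, ite_true, ite_false] <;> omega
  · intro a ha1 ha2
    constructor
    · have h0 : ∀ σ : Equiv.Perm (Fin m), completeHom (x ∘ σ) a = 0 := fun σ => by
        rw [completeHom, if_neg (not_le.mpr ha2)]
      simp [h0]
    · set t := (a + (m : ℤ) - 1).toNat with htdef
      have hmt : 1 ≤ m - 1 - t ∧ m - 1 - t < m ∧ m - 1 - (m - 1 - t) = t := by omega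
      have hne : (⟨0, hm⟩ : Fin m) ≠ (⟨m - 1 - t, hmt.2.1⟩ : Fin m) := by
        intro h
        have := congrArg Fin.val h
        simp at this
        omega
      have hg : (fun i : Fin m => if (i : ℕ) = 0 then t else m - 1 - (i : ℕ)) (⟨0, hm⟩ : Fin m)
          = (fun i : Fin m => if (i : ℕ) = 0 then t else m - 1 - (i : ℕ))
              (⟨m - 1 - t, hmt.2.1⟩ : Fin m) := by
        simp only [Fin.val_mk]
        rw [if_pos trivial, if_neg (by omega)]
        omega
      exact S9.altSum_eq_zero x hne hg
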